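/- arXiv:1702.04004 — 5 statements merged into one kernel-verified Lean document; each statement's English description precedes it below -/
import Mathlib

section
/- If r ≠ 0, the matrix exponential of M is given in closed form by exp(M) = Id + (sinh(r)/r) · M + ((cosh(r) − 1)/r²) · M², where Id is the 4×4 identity matrix. -/
open scoped Nat

noncomputable def lorentzBoostGen (dx dy dz : ℝ) : Matrix (Fin 4) (Fin 4) ℝ :=
  !![0, 0, 0, dx;
     0, 0, 0, dy;
     0, 0, 0, dz;
     dx, dy, dz, 0]

lemma lorentzBoostGen_cube (dx dy dz : ℝ) :
    (lorentzBoostGen dx dy dz) ^ 3 = (dx ^ 2 + dy ^ 2 + dz ^ 2) • lorentzBoostGen dx dy dz := by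
  ext i j
  fin_cases i <;> fin_cases j <;>
    simp [lorentzBoostGen, pow_succ, Matrix.mul_apply, Fin.sum_univ_four]
  all_goals first | ring1 | exact Or.inl (by ring)

lemma lorentzBoostGen_pow_odd (dx dy dz : ℝ) (k : ℕ) :
    (lorentzBoostGen dx dy dz) ^ (2 * k + 1) =
      (dx ^ 2 + dy ^ 2 + dz ^ 2) ^ k • lorentzBoostGen dx dy dz := by
  induction k with
  | zero => simp
  | succ k ih =>
    have h3 : 2 * (k + 1) + 1 = (2 * k + 1) + 2 := by ring
    rw [h3, pow_add, ih, smul_mul_assoc]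
    have hcube : lorentzBoostGen dx dy dz * lorentzBoostGen dx dy dz ^ 2 =
        lorentzBoostGen dx dy dz ^ 3 := by
      rw [← pow_succ']
    rw [hcube, lorentzBoostGen_cube, smul_smul, ← pow_succ]

lemma lorentzBoostGen_pow_even (dx dy dz : ℝ) (k : ℕ) :
    (lorentzBoostGen dx dy dz) ^ (2 * k + 2) =
      (dx ^ 2 + dy ^ 2 + dz ^ 2) ^ k • (lorentzBoostGen dx dy dz) ^ 2 := by
  have h : 2 * k + 2 = (2 * k + 1) + 1 := by ring
  rw [h, pow_succ, lorentzBoostGen_pow_odd, smul_mul_assoc, ← pow_two]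

theorem stmt_3 (dx dy dz : ℝ) (hr : Real.sqrt (dx ^ 2 + dy ^ 2 + dz ^ 2) ≠ 0) :
    NormedSpace.exp (lorentzBoostGen dx dy dz) =
      1 + (Real.sinh (Real.sqrt (dx ^ 2 + dy ^ 2 + dz ^ 2)) /
            Real.sqrt (dx ^ 2 + dy ^ 2 + dz ^ 2)) • lorentzBoostGen dx dy dz +
        ((Real.cosh (Real.sqrt (dx ^ 2 + dy ^ 2 + dz ^ 2)) - 1) /
            Real.sqrt (dx ^ 2 + dy ^ 2 + dz ^ 2) ^ 2) • (lorentzBoostGen dx dy dz) ^ 2 := by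
  set M := lorentzBoostGen dx dy dz with hM
  set s : ℝ := dx ^ 2 + dy ^ 2 + dz ^ 2 with hs
  set r : ℝ := Real.sqrt s with hrdef
  have hs0 : 0 ≤ s := by positivity
  have hr2 : r ^ 2 = s := Real.sq_sqrt hs0
  have hrk : ∀ k : ℕ, s ^ k = r ^ (2 * k) := fun k => by
    rw [pow_mul, hr2]
  have key : HasSum (fun n : ℕ => ((n ! : ℝ))⁻¹ • M ^ n)
      ((1 + ((Real.cosh r - 1) / r ^ 2) • M ^ 2) + (Real.sinh r / r) • M) := by
    refine HasSum.even_add_odd ?_ ?_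
    · -- even part
      have hcosh : HasSum (fun k : ℕ => r ^ (2 * k) / (2 * k)!) (Real.cosh r) :=
        Real.hasSum_cosh r
      have h1 : HasSum (fun k : ℕ => r ^ (2 * (k + 1)) / (2 * (k + 1))!)
          (Real.cosh r - 1) := by
        rw [hasSum_nat_add_iff (f := fun k : ℕ => r ^ (2 * k) / (2 * k)!) 1]
        simpa using hcosh
      have h2 := (h1.div_const (r ^ 2)).smul_const (M ^ 2)
      have h3 : HasSum (fun k : ℕ => (((2 * (k + 1))! : ℝ))⁻¹ • M ^ (2 * (k + 1)))
          (((Real.cosh r - 1) / r ^ 2) • M ^ 2) := by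
        convert h2 using 2 with k
        rw [show 2 * (k + 1) = 2 * k + 2 from by ring, hM, lorentzBoostGen_pow_even, ← hM,
          ← hs, hrk, smul_smul]
        congr 1
        have hfac : ((2 * k + 2)! : ℝ) ≠ 0 := Nat.cast_ne_zero.mpr (Nat.factorial_ne_zero _)
        rw [pow_add]
        field_simp
      have h4 := (hasSum_nat_add_iff
        (f := fun k : ℕ => (((2 * k)! : ℝ))⁻¹ • M ^ (2 * k)) 1).mp h3
      have h5 : HasSum (fun k : ℕ => (((2 * k)! : ℝ))⁻¹ • M ^ (2 * k))
          (((Real.cosh r - 1) / r ^ 2) • M ^ 2 + 1) := by simpa using h4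
      rw [add_comm]
      exact h5
    · -- odd part
      have hsinh : HasSum (fun k : ℕ => r ^ (2 * k + 1) / (2 * k + 1)!) (Real.sinh r) :=
        Real.hasSum_sinh r
      have h2 := (hsinh.div_const r).smul_const M
      convert h2 using 2 with k
      rw [hM, lorentzBoostGen_pow_odd, ← hM, ← hs, hrk, smul_smul]
      congr 1
      have hfac : ((2 * k + 1)! : ℝ) ≠ 0 := Nat.cast_ne_zero.mpr (Nat.factorial_ne_zero _)
      rw [pow_succ]
      field_simp
  have hexp := NormedSpace.exp_eq_tsum (𝕂 := ℝ) (𝔸 := Matrix (Fin 4) (Fin 4) ℝ)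
  rw [congrFun hexp M, key.tsum_eq]
  abel
end

section
/- The matrix exponential exp(M) is a Lorentz transformation: it satisfies exp(M)ᵀ · J · exp(M) = J, where J is the diagonal matrix diag(1, 1, 1, −1). -/
open Matrix

lemma lbg_transpose (dx dy dz : ℝ) : (lorentzBoostGen dx dy dz)ᵀ = lorentzBoostGen dx dy dz := by
  ext i j
  fin_cases i <;> fin_cases j <;> simp [lorentzBoostGen]

lemma JJ : (Matrix.diagonal ![1, 1, 1, -1] : Matrix (Fin 4) (Fin 4) ℝ) *
    Matrix.diagonal ![1, 1, 1, -1] = 1 := by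
  rw [Matrix.diagonal_mul_diagonal]
  ext i j
  fin_cases i <;> fin_cases j <;> simp [Matrix.one_apply]

lemma key (dx dy dz : ℝ) :
    (lorentzBoostGen dx dy dz) * Matrix.diagonal ![1, 1, 1, -1] =
      Matrix.diagonal ![1, 1, 1, -1] * (-(lorentzBoostGen dx dy dz)) := by
  ext i j
  fin_cases i <;> fin_cases j <;>
    simp [lorentzBoostGen, Matrix.mul_apply, Fin.sum_univ_four, Matrix.diagonal]

theorem stmt_5 (dx dy dz : ℝ) :
    (NormedSpace.exp (lorentzBoostGen dx dy dz))ᵀ * Matrix.diagonal ![1, 1, 1, -1] *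
        NormedSpace.exp (lorentzBoostGen dx dy dz) =
      Matrix.diagonal ![1, 1, 1, -1] := by
  set M := lorentzBoostGen dx dy dz with hM
  set J : Matrix (Fin 4) (Fin 4) ℝ := Matrix.diagonal ![1, 1, 1, -1] with hJ
  have hJunit : IsUnit J := ⟨⟨J, J, JJ, JJ⟩, rfl⟩
  have hJinv : J⁻¹ = J := Matrix.inv_eq_right_inv JJ
  have hMT : Mᵀ = J * (-M) * J⁻¹ := by
    rw [hJinv, lbg_transpose, show J * -M = M * J from (key dx dy dz).symm,
      Matrix.mul_assoc, JJ, Matrix.mul_one]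
  have h1 : (NormedSpace.exp M)ᵀ = J * NormedSpace.exp (-M) * J := by
    rw [← Matrix.exp_transpose, hMT, Matrix.exp_conj J (-M) hJunit, hJinv]
  rw [h1]
  calc J * NormedSpace.exp (-M) * J * J * NormedSpace.exp M
      = J * (NormedSpace.exp (-M) * (J * J) * NormedSpace.exp M) := by
        simp only [Matrix.mul_assoc]
    _ = J * (NormedSpace.exp (-M) * NormedSpace.exp M) := by rw [JJ, Matrix.mul_one]
    _ = J := by
        rw [← Matrix.exp_add_of_commute (-M) M ((Commute.refl M).neg_left), neg_add_cancel,
          NormedSpace.exp_zero, Matrix.mul_one]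
end

section
/- The matrix exponential exp(M) has determinant 1, so exp(M) lies in SO(3,1). -/
theorem stmt_6 (dx dy dz : ℝ) :
    (NormedSpace.exp (lorentzBoostGen dx dy dz)).det = 1 := by
  set M := lorentzBoostGen dx dy dz with hM
  set N := lorentzBoostGen (dx/2) (dy/2) (dz/2) with hN
  set P : Matrix (Fin 4) (Fin 4) ℝ := !![1,0,0,0; 0,1,0,0; 0,0,1,0; 0,0,0,-1] with hP
  have hPP : P * P = 1 := by
    rw [hP]
    ext i j
    fin_cases i <;> fin_cases j <;>
      simp [Matrix.mul_apply, Fin.sum_univ_four, Matrix.one_apply, Matrix.vecHead,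
        Matrix.vecTail]
  have hPunit : IsUnit P := (Matrix.isUnit_iff_isUnit_det P).mpr
    (IsUnit.of_mul_eq_one _ (by rw [← Matrix.det_mul, hPP, Matrix.det_one]))
  have hPinv : P⁻¹ = P := Matrix.inv_eq_right_inv hPP
  -- M = N + N
  have hNN : N + N = M := by
    rw [hM, hN]
    unfold lorentzBoostGen
    ext i j
    fin_cases i <;> fin_cases j <;> simp [Matrix.vecHead, Matrix.vecTail] <;> ring
  -- conjugation: P * M * P⁻¹ = -M
  have hconj : P * M * P⁻¹ = -M := by
    rw [hPinv, hM, hP]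
    unfold lorentzBoostGen
    ext i j
    fin_cases i <;> fin_cases j <;>
      simp [Matrix.mul_apply, Fin.sum_univ_four, Matrix.vecHead, Matrix.vecTail]
  -- det exp M is nonneg
  have hsq : NormedSpace.exp M = NormedSpace.exp N * NormedSpace.exp N := by
    rw [← hNN, Matrix.exp_add_of_commute _ _ (Commute.refl N)]
  have hnonneg : 0 ≤ (NormedSpace.exp M).det := by
    rw [hsq, Matrix.det_mul]
    exact mul_self_nonneg _
  -- det exp (-M) = det exp M
  have hdetconj : (NormedSpace.exp (-M)).det = (NormedSpace.exp M).det := by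
    rw [← hconj, Matrix.exp_conj P M hPunit, Matrix.det_mul, Matrix.det_mul, hPinv]
    have : P.det * P.det = 1 := by rw [← Matrix.det_mul, hPP, Matrix.det_one]
    nlinarith [this]
  -- det exp M * det exp (-M) = 1
  have hmul : (NormedSpace.exp M).det * (NormedSpace.exp (-M)).det = 1 := by
    rw [← Matrix.det_mul, ← Matrix.exp_add_of_commute _ _ ((Commute.refl M).neg_right),
      add_neg_cancel, NormedSpace.exp_zero, Matrix.det_one]
  rw [hdetconj] at hmul
  nlinarith [hmul, hnonneg]
end

section
/- If r ≠ 0, the matrix exponential exp(M) applied to the vector e₄ = (0, 0, 0, 1) yields the vector (sinh(r)·dx/r, sinh(r)·dy/r, sinh(r)·dz/r, cosh(r)). In particular, exp(M) translates the origin of the hyperboloid model to a point of the hyperboloid at hyperbolic distance r. -/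
open Matrix

open scoped Nat

attribute [local instance] Matrix.linftyOpNormedRing Matrix.linftyOpNormedAlgebra

section aux

variable (dx dy dz : ℝ)

local notation "M" => lorentzBoostGen dx dy dz
local notation "s" => dx ^ 2 + dy ^ 2 + dz ^ 2

lemma lbg_cube : M * M * M = (s) • M := by
  ext i j
  fin_cases i <;> fin_cases j <;>
    simp [lorentzBoostGen, Matrix.mul_apply, Fin.sum_univ_four, Matrix.smul_apply] <;>
    ring_nf <;> tauto

lemma lbg_pow_odd (k : ℕ) : M ^ (2 * k + 1) = (s) ^ k • M := by
  induction k with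
  | zero => simp
  | succ k ih =>
    have h : 2 * (k + 1) + 1 = (2 * k + 1) + 1 + 1 := by ring
    rw [h, pow_succ, pow_succ, ih, Matrix.smul_mul, Matrix.smul_mul,
      lbg_cube dx dy dz, smul_smul, ← pow_succ]

lemma lbg_pow_even (k : ℕ) : M ^ (2 * (k + 1)) = (s) ^ k • (M * M) := by
  have h : 2 * (k + 1) = (2 * k + 1) + 1 := by ring
  rw [h, pow_succ, lbg_pow_odd, Matrix.smul_mul]

lemma lbg_exp :
    NormedSpace.exp M =
      (1 : Matrix (Fin 4) (Fin 4) ℝ)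
        + ((Real.cosh (Real.sqrt s) - 1) / s) • (M * M)
        + (Real.sinh (Real.sqrt s) / Real.sqrt s) • M := by
  by_cases hs : Real.sqrt s = 0
  · have h0 : (0:ℝ) ≤ s := by positivity
    have hs0 : (s : ℝ) = 0 := by nlinarith [Real.sq_sqrt h0]
    have hdx : dx = 0 := by nlinarith [sq_nonneg dx, sq_nonneg dy, sq_nonneg dz]
    have hdy : dy = 0 := by nlinarith [sq_nonneg dx, sq_nonneg dy, sq_nonneg dz]
    have hdz : dz = 0 := by nlinarith [sq_nonneg dx, sq_nonneg dy, sq_nonneg dz]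
    have hM : M = 0 := by
      subst hdx hdy hdz
      ext i j
      fin_cases i <;> fin_cases j <;> rfl
    rw [hM]
    simp [NormedSpace.exp_zero, hs]
  · have h0 : (0:ℝ) ≤ s := by positivity
    have hr2 : Real.sqrt s ^ 2 = s := Real.sq_sqrt h0
    have hsne : (s : ℝ) ≠ 0 := fun h => hs (by rw [h, Real.sqrt_zero])
    set r := Real.sqrt s with hrdef
    rw [NormedSpace.exp_eq_tsum ℝ]
    refine HasSum.tsum_eq ?_
    have heven : HasSum (fun k : ℕ => (((2 * k)! : ℝ))⁻¹ • M ^ (2 * k))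
        ((1 : Matrix (Fin 4) (Fin 4) ℝ) + ((Real.cosh r - 1) / s) • (M * M)) := by
      have hc : HasSum (fun k : ℕ => r ^ (2 * k) / ((2 * k)! : ℝ)) (Real.cosh r) :=
        Real.hasSum_cosh r
      have hc1 : HasSum (fun k : ℕ => r ^ (2 * (k + 1)) / ((2 * (k + 1))! : ℝ))
          (Real.cosh r - 1) := by
        refine (hasSum_nat_add_iff (f := fun k : ℕ => r ^ (2 * k) / ((2 * k)! : ℝ)) 1).mpr ?_
        simpa [Finset.sum_range_one] using hc
      have hsmul : HasSum
          (fun k : ℕ => ((r ^ (2 * (k + 1)) / ((2 * (k + 1))! : ℝ)) / s) • (M * M))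
          (((Real.cosh r - 1) / s) • (M * M)) := (hc1.div_const (s)).smul_const (M * M)
      have hshift : HasSum (fun k : ℕ => (((2 * (k + 1))! : ℝ))⁻¹ • M ^ (2 * (k + 1)))
          (((Real.cosh r - 1) / s) • (M * M)) := by
        convert hsmul using 2 with k
        rw [lbg_pow_even, smul_smul]
        congr 1
        rw [pow_mul r 2 (k + 1), hr2]
        field_simp
        ring
      refine (hasSum_nat_add_iff'
        (f := fun k : ℕ => (((2 * k)! : ℝ))⁻¹ • M ^ (2 * k)) 1).mp ?_
      convert hshift using 1
      · rfl
      simp [Finset.sum_range_one]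
    have hodd : HasSum (fun k : ℕ => (((2 * k + 1)! : ℝ))⁻¹ • M ^ (2 * k + 1))
        ((Real.sinh r / r) • M) := by
      have hsi : HasSum (fun k : ℕ => r ^ (2 * k + 1) / ((2 * k + 1)! : ℝ)) (Real.sinh r) :=
        Real.hasSum_sinh r
      have hsmul : HasSum (fun k : ℕ => ((r ^ (2 * k + 1) / ((2 * k + 1)! : ℝ)) / r) • M)
          ((Real.sinh r / r) • M) := (hsi.div_const r).smul_const M
      convert hsmul using 2 with k
      rw [lbg_pow_odd, smul_smul]
      congr 1
      rw [pow_succ r (2 * k), pow_mul r 2 k, hr2]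
      field_simp
    exact HasSum.even_add_odd (f := fun n : ℕ => ((n ! : ℝ))⁻¹ • M ^ n) heven hodd

lemma lbg_mulVec : M *ᵥ ![0, 0, 0, 1] = ![dx, dy, dz, 0] := by
  funext i
  fin_cases i <;>
    simp [lorentzBoostGen, Matrix.mulVec, dotProduct, Fin.sum_univ_four]

lemma lbg_sq_mulVec : (M * M) *ᵥ ![0, 0, 0, 1] = ![0, 0, 0, s] := by
  rw [← Matrix.mulVec_mulVec, lbg_mulVec]
  funext i
  fin_cases i <;>
    simp [lorentzBoostGen, Matrix.mulVec, dotProduct, Fin.sum_univ_four] <;>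
    ring

end aux

theorem stmt_7 (dx dy dz : ℝ) (hr : Real.sqrt (dx ^ 2 + dy ^ 2 + dz ^ 2) ≠ 0) :
    NormedSpace.exp (lorentzBoostGen dx dy dz) *ᵥ ![0, 0, 0, 1] =
      ![Real.sinh (Real.sqrt (dx ^ 2 + dy ^ 2 + dz ^ 2)) * dx /
          Real.sqrt (dx ^ 2 + dy ^ 2 + dz ^ 2),
        Real.sinh (Real.sqrt (dx ^ 2 + dy ^ 2 + dz ^ 2)) * dy /
          Real.sqrt (dx ^ 2 + dy ^ 2 + dz ^ 2),
        Real.sinh (Real.sqrt (dx ^ 2 + dy ^ 2 + dz ^ 2)) * dz /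
          Real.sqrt (dx ^ 2 + dy ^ 2 + dz ^ 2),
        Real.cosh (Real.sqrt (dx ^ 2 + dy ^ 2 + dz ^ 2))] := by
  have h0 : (0:ℝ) ≤ dx ^ 2 + dy ^ 2 + dz ^ 2 := by positivity
  have hr2 : Real.sqrt (dx ^ 2 + dy ^ 2 + dz ^ 2) ^ 2 = dx ^ 2 + dy ^ 2 + dz ^ 2 :=
    Real.sq_sqrt h0
  have hsne : dx ^ 2 + dy ^ 2 + dz ^ 2 ≠ 0 := fun h => hr (by rw [h, Real.sqrt_zero])
  rw [lbg_exp dx dy dz]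
  rw [Matrix.add_mulVec, Matrix.add_mulVec, Matrix.one_mulVec,
    Matrix.smul_mulVec, Matrix.smul_mulVec, lbg_mulVec, lbg_sq_mulVec]
  funext i
  fin_cases i <;>
    simp <;>
    field_simp <;>
    nlinarith [hr2, Real.sqrt_nonneg (dx ^ 2 + dy ^ 2 + dz ^ 2)]
end

section
/- The translations exp(M) act transitively on the hyperboloid from the origin: for every point (x, y, z, w) ∈ ℝ⁴ with x² + y² + z² = w² − 1 and w > 0, there exist real numbers dx, dy, dz such that exp(M) applied to e₄ = (0, 0, 0, 1) equals (x, y, z, w), where M is the matrix determined by dx, dy, dz. -/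
open Matrix NormedSpace
open scoped Nat

attribute [local instance] Matrix.linftyOpNormedRing Matrix.linftyOpNormedAlgebra

noncomputable def mulVecE4 : Matrix (Fin 4) (Fin 4) ℝ →L[ℝ] (Fin 4 → ℝ) :=
  LinearMap.toContinuousLinearMap
    { toFun := fun A => A *ᵥ ![0, 0, 0, 1]
      map_add' := fun A B => Matrix.add_mulVec A B _
      map_smul' := fun c A => (smul_mulVec c A _) }

lemma exp_boost_e4 (dx dy dz r : ℝ) (h : dx ^ 2 + dy ^ 2 + dz ^ 2 = r ^ 2) :
    NormedSpace.exp (lorentzBoostGen dx dy dz) *ᵥ ![0, 0, 0, 1] =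
      Real.cosh r • ![(0:ℝ), 0, 0, 1] + (Real.sinh r / r) • ![dx, dy, dz, 0] := by
  set M := lorentzBoostGen dx dy dz with hM
  have key1 : M *ᵥ ![0, 0, 0, 1] = ![dx, dy, dz, 0] := by
    funext i; fin_cases i <;>
      simp [hM, lorentzBoostGen, Matrix.mulVec, dotProduct, Fin.sum_univ_four]
  have key2 : M *ᵥ ![dx, dy, dz, 0] = (r ^ 2) • ![(0:ℝ), 0, 0, 1] := by
    funext i; fin_cases i <;>
      simp [hM, lorentzBoostGen, Matrix.mulVec, dotProduct, Fin.sum_univ_four] <;>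
      nlinarith [h]
  rcases eq_or_ne r 0 with hr | hr
  · have hdx : dx = 0 := by nlinarith [sq_nonneg dx, sq_nonneg dy, sq_nonneg dz]
    have hdy : dy = 0 := by nlinarith [sq_nonneg dx, sq_nonneg dy, sq_nonneg dz]
    have hdz : dz = 0 := by nlinarith [sq_nonneg dx, sq_nonneg dy, sq_nonneg dz]
    have hM0 : M = 0 := by
      subst hdx hdy hdz
      funext i j; fin_cases i <;> fin_cases j <;> rfl
    rw [hM0, exp_zero, Matrix.one_mulVec, hr, hdx, hdy, hdz]
    simp
  -- even powers applied to e4 and to u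
  have even_e4 : ∀ n : ℕ, M ^ (2 * n) *ᵥ ![(0:ℝ), 0, 0, 1] = (r ^ (2 * n)) • ![(0:ℝ), 0, 0, 1] := by
    intro n
    induction n with
    | zero => simp
    | succ n ih =>
        have h2 : 2 * (n + 1) = 2 * n + 2 := by ring
        rw [h2, pow_add, pow_two, ← Matrix.mulVec_mulVec, ← Matrix.mulVec_mulVec, key1, key2,
          Matrix.mulVec_smul, ih, smul_smul]
        congr 1
        ring
  have even_u : ∀ n : ℕ, M ^ (2 * n) *ᵥ ![dx, dy, dz, 0] = (r ^ (2 * n)) • ![dx, dy, dz, 0] := by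
    intro n
    induction n with
    | zero => simp
    | succ n ih =>
        have h2 : 2 * (n + 1) = 2 * n + 2 := by ring
        rw [h2, pow_add, pow_two, ← Matrix.mulVec_mulVec, ← Matrix.mulVec_mulVec, key2,
          Matrix.mulVec_smul, key1, Matrix.mulVec_smul, ih, smul_smul]
        congr 1
        ring
  have odd_e4 : ∀ n : ℕ, M ^ (2 * n + 1) *ᵥ ![(0:ℝ), 0, 0, 1] = (r ^ (2 * n)) • ![dx, dy, dz, 0] := by
    intro n
    rw [pow_succ, ← Matrix.mulVec_mulVec, key1, even_u]
  -- the exp series applied to e4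
  have hsum : HasSum (fun n : ℕ => (n !⁻¹ : ℝ) • (M ^ n *ᵥ ![(0:ℝ), 0, 0, 1]))
      (NormedSpace.exp M *ᵥ ![0, 0, 0, 1]) := by
    have := (NormedSpace.exp_series_hasSum_exp' (𝕂 := ℝ) M).mapL mulVecE4
    simp [mulVecE4, Matrix.mulVec_smul] at this
    convert this using 4 <;> rfl
  have hcosh : HasSum (fun n : ℕ => (((2 * n)! : ℝ))⁻¹ • (M ^ (2 * n) *ᵥ ![(0:ℝ), 0, 0, 1]))
      (Real.cosh r • ![(0:ℝ), 0, 0, 1]) := by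
    have := (Real.hasSum_cosh r).smul_const (![(0:ℝ), 0, 0, 1])
    convert this using 2 with n
    rw [even_e4, smul_smul]
    congr 1
    field_simp
  have hsinh : HasSum (fun n : ℕ => (((2 * n + 1)! : ℝ))⁻¹ • (M ^ (2 * n + 1) *ᵥ ![(0:ℝ), 0, 0, 1]))
      ((Real.sinh r / r) • ![dx, dy, dz, 0]) := by
    have := ((Real.hasSum_sinh r).div_const r).smul_const (![dx, dy, dz, 0])
    convert this using 2 with n
    rw [odd_e4, smul_smul]
    congr 1
    field_simp
    ring
  exact (hsum.unique (HasSum.even_add_odd hcosh hsinh))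

theorem stmt_8 (x y z w : ℝ) (h : x ^ 2 + y ^ 2 + z ^ 2 = w ^ 2 - 1) (hw : 0 < w) :
    ∃ dx dy dz : ℝ,
      NormedSpace.exp (lorentzBoostGen dx dy dz) *ᵥ ![0, 0, 0, 1] = ![x, y, z, w] := by
  rcases eq_or_lt_of_le (by nlinarith [sq_nonneg x, sq_nonneg y, sq_nonneg z] : (1:ℝ) ≤ w) with hw1 | hw1
  · refine ⟨0, 0, 0, ?_⟩
    have hx : x = 0 := by nlinarith [sq_nonneg x, sq_nonneg y, sq_nonneg z]
    have hy : y = 0 := by nlinarith [sq_nonneg x, sq_nonneg y, sq_nonneg z]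
    have hz : z = 0 := by nlinarith [sq_nonneg x, sq_nonneg y, sq_nonneg z]
    rw [exp_boost_e4 0 0 0 0 (by ring)]
    subst hx hy hz
    funext i; fin_cases i <;> simp [← hw1]
  · set s : ℝ := Real.sqrt (w ^ 2 - 1) with hs
    have hs_pos : 0 < s := Real.sqrt_pos.mpr (by nlinarith)
    have hs_sq : s ^ 2 = w ^ 2 - 1 := Real.sq_sqrt (by nlinarith)
    set r : ℝ := Real.arsinh s with hrdef
    have hsinh_r : Real.sinh r = s := Real.sinh_arsinh s
    have hcosh_r : Real.cosh r = w := by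
      rw [hrdef, Real.cosh_arsinh]
      rw [show (1 : ℝ) + s ^ 2 = w ^ 2 by linarith]
      exact Real.sqrt_sq hw.le
    refine ⟨r / s * x, r / s * y, r / s * z, ?_⟩
    have hsum_sq : (r / s * x) ^ 2 + (r / s * y) ^ 2 + (r / s * z) ^ 2 = r ^ 2 := by
      have : (r / s) ^ 2 * (x ^ 2 + y ^ 2 + z ^ 2) = r ^ 2 := by
        rw [h, ← hs_sq]
        field_simp
      nlinarith [this]
    rw [exp_boost_e4 _ _ _ r hsum_sq]
    have hr_ne : r ≠ 0 := by
      intro h0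
      rw [h0, Real.sinh_zero] at hsinh_r
      exact hs_pos.ne hsinh_r
    funext i; fin_cases i <;>
      simp [hcosh_r, hsinh_r] <;>
      field_simp <;> ring
end
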